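/- As ρ → 0⁺, the surface-area function satisfies lim_{ρ→0⁺} A(ρ) · (r_s/ρ)^{ζ − k̃ + 1} = 4π ζ² r_s²; since ζ − k̃ + 1 > 0 for all k̃ ∈ ℝ, consequently A(ρ) → 0 as ρ → 0⁺. -/

import Mathlib

open Real Filter Topology

private lemma surface_area_aux (C p q a b c : ℝ) (ha : 0 < a) (hb : 0 < b)
    (hc : 0 < c) (hq : 0 < q) (key : a * c = b * b) :
    C * (p / a) / (1 + q / b) ^ 2 * c⁻¹ = C * p / (b + q) ^ 2 := by
  have hbq : 0 < b + q := by linarith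
  field_simp
  linear_combination (-(C * p)) * key

/-- As `ρ → 0⁺`, `A(ρ)·(r_s/ρ)^{ζ − k̃ + 1} → 4π ζ² r_s²`; since `ζ − k̃ + 1 > 0`,
consequently `A(ρ) → 0` as `ρ → 0⁺`. -/
theorem surface_area_origin_asymptotics
    (rs kt : ℝ) (hrs : 0 < rs)
    (ζ : ℝ) (hζ : ζ = Real.sqrt (1 + 3 * kt ^ 2))
    (A : ℝ → ℝ)
    (hA : ∀ ρ : ℝ, 0 < ρ → ρ ≠ rs → A ρ =
      4 * Real.pi * ζ ^ 2 * rs ^ 2 * |1 - rs / ρ| ^ (ζ + kt - 1) /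
        (1 - Real.sign (1 - rs / ρ) * |1 - rs / ρ| ^ ζ) ^ 2) :
    Tendsto (fun ρ : ℝ => A ρ * (rs / ρ) ^ (ζ - kt + 1)) (𝓝[>] 0)
        (𝓝 (4 * Real.pi * ζ ^ 2 * rs ^ 2)) ∧
      0 < ζ - kt + 1 ∧
      Tendsto A (𝓝[>] 0) (𝓝 0) := by
  have hζsq : ζ ^ 2 = 1 + 3 * kt ^ 2 := by
    rw [hζ]; exact Real.sq_sqrt (by positivity)
  have hζ0 : 0 < ζ := by
    rw [hζ]; exact Real.sqrt_pos.2 (by positivity)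
  have hktζ : kt < ζ := by nlinarith [sq_nonneg (ζ - kt), sq_nonneg (ζ + kt)]
  have he : 0 < ζ - kt + 1 := by linarith
  set C := 4 * Real.pi * ζ ^ 2 * rs ^ 2 with hC
  -- eventual equality with a nicer function
  have hev : ∀ᶠ ρ in 𝓝[>] (0 : ℝ), A ρ * (rs / ρ) ^ (ζ - kt + 1) =
      C * (1 - ρ / rs) ^ (ζ + kt - 1) / ((ρ / rs) ^ ζ + (1 - ρ / rs) ^ ζ) ^ 2 := by
    filter_upwards [Ioo_mem_nhdsGT_of_mem (Set.left_mem_Ico.2 hrs)] with ρ hρ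
    obtain ⟨hρ0, hρrs⟩ := hρ
    have hne : ρ ≠ rs := ne_of_lt hρrs
    have hneg : 1 - rs / ρ < 0 := by
      rw [sub_neg]
      exact (one_lt_div hρ0).2 hρrs
    have habs : |1 - rs / ρ| = (1 - ρ / rs) / (ρ / rs) := by
      rw [abs_of_neg hneg]
      field_simp
      ring
    have hsign : Real.sign (1 - rs / ρ) = -1 := Real.sign_of_neg hneg
    set w := ρ / rs with hw
    set v := 1 - ρ / rs with hv
    have hw0 : 0 < w := by positivity
    have hv0 : 0 < v := by
      rw [hv, sub_pos]; exact (div_lt_one hrs).2 hρrs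
    have hrsρ : rs / ρ = w⁻¹ := by rw [hw]; field_simp
    rw [hA ρ hρ0 hne, habs, hsign, hrsρ,
      Real.div_rpow hv0.le hw0.le, Real.div_rpow hv0.le hw0.le,
      Real.inv_rpow hw0.le]
    have key : w ^ (ζ + kt - 1) * w ^ (ζ - kt + 1) = w ^ ζ * w ^ ζ := by
      rw [← Real.rpow_add hw0, ← Real.rpow_add hw0]; ring_nf
    rw [neg_one_mul, sub_neg_eq_add]
    exact surface_area_aux C _ _ _ _ _ (Real.rpow_pos_of_pos hw0 _)
      (Real.rpow_pos_of_pos hw0 _) (Real.rpow_pos_of_pos hw0 _)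
      (Real.rpow_pos_of_pos hv0 _) key
  -- the limit of the nice function
  have hbase : Tendsto (fun ρ : ℝ => 1 - ρ / rs) (𝓝[>] 0) (𝓝 1) := by
    have hcont : Continuous fun ρ : ℝ => 1 - ρ / rs := by fun_prop
    have : Tendsto (fun ρ : ℝ => 1 - ρ / rs) (𝓝 0) (𝓝 1) := by
      simpa using hcont.tendsto 0
    exact this.mono_left nhdsWithin_le_nhds
  have hbase0 : Tendsto (fun ρ : ℝ => ρ / rs) (𝓝[>] 0) (𝓝 0) := by
    have hcont0 : Continuous fun ρ : ℝ => ρ / rs := by fun_prop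
    have : Tendsto (fun ρ : ℝ => ρ / rs) (𝓝 0) (𝓝 0) := by
      simpa using hcont0.tendsto 0
    exact this.mono_left nhdsWithin_le_nhds
  have hlim : Tendsto (fun ρ : ℝ => C * (1 - ρ / rs) ^ (ζ + kt - 1) /
      ((ρ / rs) ^ ζ + (1 - ρ / rs) ^ ζ) ^ 2) (𝓝[>] 0) (𝓝 C) := by
    have t1 : Tendsto (fun ρ : ℝ => (1 - ρ / rs) ^ (ζ + kt - 1)) (𝓝[>] 0) (𝓝 1) := by
      have := hbase.rpow_const (p := ζ + kt - 1) (Or.inl one_ne_zero)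
      simpa using this
    have t2 : Tendsto (fun ρ : ℝ => (ρ / rs) ^ ζ) (𝓝[>] 0) (𝓝 0) := by
      have := hbase0.rpow_const (p := ζ) (Or.inr hζ0.le)
      simpa [Real.zero_rpow hζ0.ne'] using this
    have t3 : Tendsto (fun ρ : ℝ => (1 - ρ / rs) ^ ζ) (𝓝[>] 0) (𝓝 1) := by
      have := hbase.rpow_const (p := ζ) (Or.inl one_ne_zero)
      simpa using this
    have t4 : Tendsto (fun ρ : ℝ => ((ρ / rs) ^ ζ + (1 - ρ / rs) ^ ζ) ^ 2)
        (𝓝[>] 0) (𝓝 1) := by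
      have := (t2.add t3).pow 2
      simpa using this
    have tc : Tendsto (fun _ : ℝ => C) (𝓝[>] (0:ℝ)) (𝓝 C) := tendsto_const_nhds
    have := (tc.mul t1).div t4 one_ne_zero
    rw [mul_one, div_one] at this
    exact this
  have hmain : Tendsto (fun ρ : ℝ => A ρ * (rs / ρ) ^ (ζ - kt + 1)) (𝓝[>] 0) (𝓝 C) :=
    hlim.congr' (hev.mono fun _ h => h.symm)
  refine ⟨hmain, he, ?_⟩
  have hzero : Tendsto (fun ρ : ℝ => (ρ / rs) ^ (ζ - kt + 1)) (𝓝[>] 0) (𝓝 0) := by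
    have := hbase0.rpow_const (p := ζ - kt + 1) (Or.inr he.le)
    simpa [Real.zero_rpow he.ne'] using this
  have hprod := hmain.mul hzero
  rw [mul_zero] at hprod
  refine hprod.congr' ?_
  filter_upwards [self_mem_nhdsWithin] with ρ (hρ : 0 < ρ)
  have h1 : (rs / ρ) ^ (ζ - kt + 1) * (ρ / rs) ^ (ζ - kt + 1) = 1 := by
    rw [← Real.mul_rpow (by positivity) (by positivity), div_mul_div_comm,
      mul_comm rs ρ, div_self (by positivity)]
    exact Real.one_rpow _
  calc A ρ * (rs / ρ) ^ (ζ - kt + 1) * (ρ / rs) ^ (ζ - kt + 1)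
      = A ρ * ((rs / ρ) ^ (ζ - kt + 1) * (ρ / rs) ^ (ζ - kt + 1)) := by ring
    _ = A ρ := by rw [h1, mul_one]
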